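/- arXiv:1610.01907 — 4 statements merged into one kernel-verified Lean document; each statement's English description precedes it below -/
import Mathlib

section
/- Let b : ℝ → ℝ be defined by b(p) = (4 p² f² + 2 p f)/(3 p² f² + 3) for a fixed parameter f with 0 < f ≤ 1 satisfying 4 - 9/f² + 6/f ≥ 0. Then p∞ = 2/3 + (1/3)·√(4 - 9/f² + 6/f) is a fixed point of b, i.e. b(p∞) = p∞. -/
theorem bbpssw_fixed_point (f : ℝ) (hf0 : 0 < f) (hf1 : f ≤ 1)
    (hdisc : 0 ≤ 4 - 9 / f ^ 2 + 6 / f) :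
    let b : ℝ → ℝ := fun p => (4 * p ^ 2 * f ^ 2 + 2 * p * f) / (3 * p ^ 2 * f ^ 2 + 3)
    let pinf : ℝ := 2 / 3 + (1 / 3) * Real.sqrt (4 - 9 / f ^ 2 + 6 / f)
    b pinf = pinf := by
  intro b pinf
  have hfne : f ≠ 0 := ne_of_gt hf0
  have hs : Real.sqrt (4 - 9 / f ^ 2 + 6 / f) ^ 2 = 4 - 9 / f ^ 2 + 6 / f :=
    Real.sq_sqrt hdisc
  set s := Real.sqrt (4 - 9 / f ^ 2 + 6 / f) with hsdef
  have hs2 : f ^ 2 * s ^ 2 = 4 * f ^ 2 - 9 + 6 * f := by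
    rw [hs]; field_simp
  have hne : (3 * pinf ^ 2 * f ^ 2 + 3) ≠ 0 := by positivity
  show (4 * pinf ^ 2 * f ^ 2 + 2 * pinf * f) / (3 * pinf ^ 2 * f ^ 2 + 3) = pinf
  rw [div_eq_iff hne]
  show 4 * pinf ^ 2 * f ^ 2 + 2 * pinf * f = (2 / 3 + 1 / 3 * s) * (3 * pinf ^ 2 * f ^ 2 + 3)
  have hpinf : pinf = 2 / 3 + 1 / 3 * s := rfl
  rw [hpinf]
  nlinarith [hs2, sq_nonneg s, sq_nonneg f, sq_nonneg (s*f)]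
end

section
/- Fix 0.78 ≤ f₀ ≤ 1 with 4f₀ - 3 ≥ 0 and f₀ ≠ 1/2. Define p∞ = (1/2 + √(4f₀-3)/(4f₀-2), 0, 0, 1/2 - √(4f₀-3)/(4f₀-2)). Then p∞ is a fixed point of the map sending (p₀₀,p₀₁,p₁₀,p₁₁) to (1/N)·(f₀²(p₀₀²+2p₀₀p₀₁)+f₁²(p₁₁²+2p₁₀p₁₁)+2f₀f₁(p₁₁p₀₀+p₁₀p₀₀+p₁₁p₀₁), f₀²p₀₁²+2f₀f₁p₁₀p₀₁+f₁²p₁₀², f₀²(p₁₀²+2p₁₀p₁₁)+f₁²(p₀₁²+2p₀₀p₀₁)+2f₀f₁(p₀₁p₁₀+p₀₀p₁₀+p₀₁p₁₁), f₀²p₁₁²+2f₀f₁p₀₀p₁₁+f₁²p₀₀²), where f₁ = 1-f₀ and N = (f₀²+f₁²)((p₀₀+p₀₁)²+(p₁₀+p₁₁)²)+4f₀f₁(p₀₀+p₀₁)(p₁₀+p₁₁). -/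
/-- Recurrence relations of the noisy DEJMPS protocol for binary pairs. -/
theorem dejmps_binary_fixed_point (f₀ : ℝ) (hlo : 0.78 ≤ f₀) (hhi : f₀ ≤ 1)
    (hdisc : 0 ≤ 4 * f₀ - 3) (hne : f₀ ≠ 1 / 2) :
    let f₁ : ℝ := 1 - f₀
    let p₀₀ : ℝ := 1 / 2 + Real.sqrt (4 * f₀ - 3) / (4 * f₀ - 2)
    let p₀₁ : ℝ := 0
    let p₁₀ : ℝ := 0
    let p₁₁ : ℝ := 1 / 2 - Real.sqrt (4 * f₀ - 3) / (4 * f₀ - 2)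
    let N : ℝ := (f₀ ^ 2 + f₁ ^ 2) * ((p₀₀ + p₀₁) ^ 2 + (p₁₀ + p₁₁) ^ 2)
      + 4 * f₀ * f₁ * (p₀₀ + p₀₁) * (p₁₀ + p₁₁)
    (1 / N) * (f₀ ^ 2 * (p₀₀ ^ 2 + 2 * p₀₀ * p₀₁) + f₁ ^ 2 * (p₁₁ ^ 2 + 2 * p₁₀ * p₁₁)
        + 2 * f₀ * f₁ * (p₁₁ * p₀₀ + p₁₀ * p₀₀ + p₁₁ * p₀₁)) = p₀₀ ∧
    (1 / N) * (f₀ ^ 2 * p₀₁ ^ 2 + 2 * f₀ * f₁ * p₁₀ * p₀₁ + f₁ ^ 2 * p₁₀ ^ 2) = p₀₁ ∧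
    (1 / N) * (f₀ ^ 2 * (p₁₀ ^ 2 + 2 * p₁₀ * p₁₁) + f₁ ^ 2 * (p₀₁ ^ 2 + 2 * p₀₀ * p₀₁)
        + 2 * f₀ * f₁ * (p₀₁ * p₁₀ + p₀₀ * p₁₀ + p₀₁ * p₁₁)) = p₁₀ ∧
    (1 / N) * (f₀ ^ 2 * p₁₁ ^ 2 + 2 * f₀ * f₁ * p₀₀ * p₁₁ + f₁ ^ 2 * p₀₀ ^ 2) = p₁₁ := by
  intro f₁ p₀₀ p₀₁ p₁₀ p₁₁ N
  set s := Real.sqrt (4 * f₀ - 3) with hs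
  have hs2 : s ^ 2 = 4 * f₀ - 3 := Real.sq_sqrt hdisc
  have hd : (4 : ℝ) * f₀ - 2 ≠ 0 := by intro h; apply hne; linarith
  have ha : p₀₀ = 1 / 2 + s / (4 * f₀ - 2) := rfl
  have hb : p₁₁ = 1 / 2 - s / (4 * f₀ - 2) := rfl
  have h01 : p₀₁ = 0 := rfl
  have h10 : p₁₀ = 0 := rfl
  have hf : f₁ = 1 - f₀ := rfl
  have e1 : f₀ * p₀₀ + f₁ * p₁₁ = (1 + s) / 2 := by
    rw [ha, hb, hf]
    have ht : s / (4 * f₀ - 2) * (4 * f₀ - 2) = s := div_mul_cancel₀ s hd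
    linear_combination (1 / 2 : ℝ) * ht
  have e2 : f₀ * p₁₁ + f₁ * p₀₀ = (1 - s) / 2 := by
    rw [ha, hb, hf]
    have ht : s / (4 * f₀ - 2) * (4 * f₀ - 2) = s := div_mul_cancel₀ s hd
    linear_combination (-1 / 2 : ℝ) * ht
  have hN : N = 2 * f₀ - 1 := by
    have : N = (f₀ * p₀₀ + f₁ * p₁₁) ^ 2 + (f₀ * p₁₁ + f₁ * p₀₀) ^ 2 := by
      show (f₀ ^ 2 + f₁ ^ 2) * ((p₀₀ + p₀₁) ^ 2 + (p₁₀ + p₁₁) ^ 2)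
        + 4 * f₀ * f₁ * (p₀₀ + p₀₁) * (p₁₀ + p₁₁) = _
      rw [h01, h10]; ring
    rw [this, e1, e2]; nlinarith [hs2]
  have hNne : N ≠ 0 := by rw [hN]; intro h; apply hne; linarith
  refine ⟨?_, ?_, ?_, ?_⟩ <;> rw [one_div, inv_mul_eq_div, div_eq_iff hNne, hN] <;> (try simp only [h01, h10])
  · have : f₀ ^ 2 * (p₀₀ ^ 2 + 2 * p₀₀ * 0) + f₁ ^ 2 * (p₁₁ ^ 2 + 2 * 0 * p₁₁)
        + 2 * f₀ * f₁ * (p₁₁ * p₀₀ + 0 * p₀₀ + p₁₁ * 0) = (f₀ * p₀₀ + f₁ * p₁₁) ^ 2 := by ring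
    rw [this, e1, ha]; field_simp; linear_combination (4 * f₀ - 2) * hs2
  · ring
  · have : f₀ ^ 2 * (0 ^ 2 + 2 * 0 * p₁₁) + f₁ ^ 2 * (0 ^ 2 + 2 * p₀₀ * 0)
        + 2 * f₀ * f₁ * (0 * 0 + p₀₀ * 0 + 0 * p₁₁) = 0 := by ring
    rw [this]; ring
  · have : f₀ ^ 2 * p₁₁ ^ 2 + 2 * f₀ * f₁ * p₀₀ * p₁₁ + f₁ ^ 2 * p₀₀ ^ 2
        = (f₀ * p₁₁ + f₁ * p₀₀) ^ 2 := by ring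
    rw [this, e2, hb]; field_simp; linear_combination (4 * f₀ - 2) * hs2
end

section
/- Let ρ_AB be a density operator with purification |ψ⟩_{ABR}, and let φ_AB = |φ⟩⟨φ|_A ⊗ μ_B with tr_B ρ_AB satisfying ‖tr_B ρ_AB - |φ⟩⟨φ|_A‖₁ ≤ ε and tr_A ρ_AB = μ_B. Then ‖ρ_AB - |φ⟩⟨φ|_A ⊗ μ_B‖₁ ≤ 4√ε. -/
set_option maxHeartbeats 1000000


open scoped ComplexOrder
open Matrix

/-- The trace norm `‖A‖₁ = tr √(AᴴA)`. -/
noncomputable def traceNorm {n : Type*} [Fintype n] [DecidableEq n]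
    (A : Matrix n n ℂ) : ℝ :=
  (((Matrix.posSemidef_conjTranspose_mul_self A).1.eigenvectorUnitary : Matrix n n ℂ) *
    diagonal (((↑) : ℝ → ℂ) ∘ (√·) ∘ (Matrix.posSemidef_conjTranspose_mul_self A).1.eigenvalues) *
    (star ((Matrix.posSemidef_conjTranspose_mul_self A).1.eigenvectorUnitary : Matrix n n ℂ))).trace.re

/-- Kronecker product of operators on the two subsystems. -/
noncomputable def kron {a b : Type*} (A : Matrix a a ℂ) (B : Matrix b b ℂ) :
    Matrix (a × b) (a × b) ℂ :=
  Matrix.of fun x y => A x.1 y.1 * B x.2 y.2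

/-- Partial trace over the second subsystem. -/
noncomputable def ptraceB {a b : Type*} [Fintype b]
    (ρ : Matrix (a × b) (a × b) ℂ) : Matrix a a ℂ :=
  Matrix.of fun x y => ∑ s, ρ (x, s) (y, s)

/-- Partial trace over the first subsystem. -/
noncomputable def ptraceA {a b : Type*} [Fintype a]
    (ρ : Matrix (a × b) (a × b) ℂ) : Matrix b b ℂ :=
  Matrix.of fun x y => ∑ s, ρ (s, x) (s, y)

/-- Rank-one projector `|v⟩⟨v|`. -/
noncomputable def proj {n : Type*} (v : n → ℂ) : Matrix n n ℂ :=
  Matrix.of fun i j => v i * star (v j)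

namespace TN
variable {n : Type*} [Fintype n]

noncomputable def cnorm (v : n → ℂ) : ℝ := ‖(WithLp.equiv 2 (n → ℂ)).symm v‖

lemma cnorm_nonneg (v : n → ℂ) : 0 ≤ cnorm v := norm_nonneg _

lemma cnorm_sq (v : n → ℂ) : cnorm v ^ 2 = (dotProduct (star v) v).re := by
  have h := EuclideanSpace.inner_toLp_toLp (𝕜 := ℂ) v v
  have h2 : (inner ℂ (WithLp.toLp 2 v) (WithLp.toLp 2 v)).re
      = cnorm v ^ 2 := inner_self_eq_norm_sq (𝕜 := ℂ) _
  rw [← h2, h, dotProduct_comm]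

lemma cs (v w : n → ℂ) :
    ‖dotProduct (star v) w‖ ≤ cnorm v * cnorm w := by
  have h := norm_inner_le_norm (𝕜 := ℂ)
    (WithLp.toLp 2 v) (WithLp.toLp 2 w)
  rwa [EuclideanSpace.inner_toLp_toLp, dotProduct_comm] at h

variable [DecidableEq n]

/-- contraction property -/
def Ctr (B : Matrix n n ℂ) : Prop := ∀ v, cnorm (B *ᵥ v) ≤ cnorm v

lemma cnorm_conjTranspose_mulVec_sq (B : Matrix n n ℂ) (v : n → ℂ) :
    cnorm (Bᴴ *ᵥ v) ^ 2 = (dotProduct (star v) ((B * Bᴴ) *ᵥ v)).re := by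
  rw [cnorm_sq, star_mulVec, conjTranspose_conjTranspose, ← dotProduct_mulVec, mulVec_mulVec]

lemma ctr_conjTranspose {B : Matrix n n ℂ} (hB : Ctr B) : Ctr Bᴴ := by
  intro v
  rcases eq_or_lt_of_le (cnorm_nonneg (Bᴴ *ᵥ v)) with h | h
  · rw [← h]; exact cnorm_nonneg v
  have key : cnorm (Bᴴ *ᵥ v) ^ 2 ≤ cnorm v * cnorm (Bᴴ *ᵥ v) := by
    rw [cnorm_conjTranspose_mulVec_sq]
    calc (dotProduct (star v) ((B * Bᴴ) *ᵥ v)).re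
        ≤ ‖dotProduct (star v) ((B * Bᴴ) *ᵥ v)‖ := Complex.re_le_norm _
      _ ≤ cnorm v * cnorm ((B * Bᴴ) *ᵥ v) := cs _ _
      _ ≤ cnorm v * cnorm (Bᴴ *ᵥ v) := by
          refine mul_le_mul_of_nonneg_left ?_ (cnorm_nonneg v)
          rw [← mulVec_mulVec]; exact hB _
  nlinarith


section core
variable (A : Matrix n n ℂ)

noncomputable def Uu : Matrix n n ℂ :=
  (Matrix.posSemidef_conjTranspose_mul_self A).1.eigenvectorUnitary

noncomputable def lam : n → ℝ :=
  (Matrix.posSemidef_conjTranspose_mul_self A).1.eigenvalues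

noncomputable def Vv (i : n) : n → ℂ :=
  ⇑((Matrix.posSemidef_conjTranspose_mul_self A).1.eigenvectorBasis i)

lemma lam_nonneg (i : n) : 0 ≤ lam A i :=
  (Matrix.posSemidef_conjTranspose_mul_self A).eigenvalues_nonneg i

lemma star_U_mul_U : (star (Uu A)) * Uu A = 1 :=
  Unitary.coe_star_mul_self ((Matrix.posSemidef_conjTranspose_mul_self A).1.eigenvectorUnitary)

lemma U_mul_star_U : Uu A * (star (Uu A)) = 1 :=
  Unitary.coe_mul_star_self ((Matrix.posSemidef_conjTranspose_mul_self A).1.eigenvectorUnitary)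

lemma Uu_apply (i j : n) : Uu A i j = Vv A j i := rfl

lemma spectral : Aᴴ * A = Uu A * diagonal ((↑) ∘ lam A) * star (Uu A) :=
  (Matrix.posSemidef_conjTranspose_mul_self A).1.spectral_theorem

lemma traceNorm_eq_sum : traceNorm A = ∑ i, Real.sqrt (lam A i) := by
  have : traceNorm A
      = (Uu A * diagonal (((↑) : ℝ → ℂ) ∘ Real.sqrt ∘ lam A) * star (Uu A)).trace.re := rfl
  rw [this, trace_mul_cycle, star_U_mul_U, one_mul, trace_diagonal]
  simp [Complex.ofReal_re]

lemma Vv_ortho (i j : n) :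
    dotProduct (star (Vv A i)) (Vv A j) = if i = j then 1 else 0 := by
  have h := ((Matrix.posSemidef_conjTranspose_mul_self A).1.eigenvectorBasis).orthonormal
  rw [orthonormal_iff_ite] at h
  have := h i j
  rwa [EuclideanSpace.inner_eq_star_dotProduct, dotProduct_comm] at this

lemma cnorm_Vv (i : n) : cnorm (Vv A i) = 1 := by
  have h : cnorm (Vv A i) ^ 2 = 1 := by
    rw [cnorm_sq, Vv_ortho A i i]; simp
  nlinarith [cnorm_nonneg (Vv A i)]

lemma mulVec_AAH (i : n) : (Aᴴ * A) *ᵥ Vv A i = (lam A i : ℂ) • Vv A i := by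
  have h := (Matrix.posSemidef_conjTranspose_mul_self A).1.mulVec_eigenvectorBasis i
  ext x
  have hx := congrFun h x
  simpa [Vv, lam, Complex.real_smul] using hx

lemma cnorm_mulVec_sq (i : n) : cnorm (A *ᵥ Vv A i) ^ 2 = lam A i := by
  rw [cnorm_sq, star_mulVec, ← dotProduct_mulVec, mulVec_mulVec, mulVec_AAH,
    dotProduct_smul, Vv_ortho A i i]
  simp

lemma cnorm_mulVec (i : n) : cnorm (A *ᵥ Vv A i) = Real.sqrt (lam A i) := by
  rw [← cnorm_mulVec_sq A i, Real.sqrt_sq (cnorm_nonneg _)]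

lemma trace_sandwich (M : Matrix n n ℂ) :
    M.trace = ∑ i, dotProduct (star (Vv A i)) (M *ᵥ Vv A i) := by
  have h1 : M.trace = (star (Uu A) * M * Uu A).trace := by
    rw [trace_mul_cycle, U_mul_star_U, one_mul]
  rw [h1, trace]
  congr 1
  ext i
  simp only [diag_apply, mul_apply, star_apply, mulVec, dotProduct, Uu_apply, Finset.sum_mul,
    Finset.mul_sum]
  rw [Finset.sum_comm]
  congr 1; ext x; congr 1; ext y; simp only [Pi.star_apply]; ring

/-- key dual bound -/
lemma abs_trace_mul_le (B : Matrix n n ℂ) (hB : Ctr Bᴴ) :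
    ‖(B * A).trace‖ ≤ traceNorm A := by
  rw [trace_sandwich A, traceNorm_eq_sum]
  refine le_trans (norm_sum_le _ _) (Finset.sum_le_sum fun i _ => ?_)
  have h1 : (B * A) *ᵥ Vv A i = B *ᵥ (A *ᵥ Vv A i) := by rw [← mulVec_mulVec]
  have h2 : dotProduct (star (Vv A i)) (B *ᵥ (A *ᵥ Vv A i))
      = dotProduct (star (Bᴴ *ᵥ Vv A i)) (A *ᵥ Vv A i) := by
    rw [star_mulVec, conjTranspose_conjTranspose, ← dotProduct_mulVec]
  calc ‖dotProduct (star (Vv A i)) ((B * A) *ᵥ Vv A i)‖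
      ≤ cnorm (Bᴴ *ᵥ Vv A i) * cnorm (A *ᵥ Vv A i) := by
        rw [h1, h2]; exact cs _ _
    _ ≤ 1 * Real.sqrt (lam A i) := by
        rw [cnorm_mulVec]
        exact mul_le_mul_of_nonneg_right (by simpa [cnorm_Vv] using hB (Vv A i))
          (Real.sqrt_nonneg _)
    _ = Real.sqrt (lam A i) := one_mul _

noncomputable def sand (D : Matrix n n ℂ) : Matrix n n ℂ := Uu A * D * star (Uu A)

lemma sand_mul (D E : Matrix n n ℂ) : sand A D * sand A E = sand A (D * E) := by
  unfold sand
  calc Uu A * D * star (Uu A) * (Uu A * E * star (Uu A))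
      = Uu A * D * (star (Uu A) * Uu A) * E * star (Uu A) := by
        simp only [mul_assoc]
    _ = Uu A * (D * E) * star (Uu A) := by rw [star_U_mul_U]; simp only [mul_one, mul_assoc]

lemma sand_conjTranspose (D : Matrix n n ℂ) : (sand A D)ᴴ = sand A Dᴴ := by
  unfold sand
  simp only [conjTranspose_mul, star_eq_conjTranspose, conjTranspose_conjTranspose]
  simp only [mul_assoc]

lemma sand_trace (D : Matrix n n ℂ) : (sand A D).trace = D.trace := by
  unfold sand
  rw [trace_mul_cycle, star_U_mul_U, one_mul]

lemma spectral' : Aᴴ * A = sand A (diagonal ((↑) ∘ lam A)) := spectral A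

/-- attainment of the trace norm by a contraction -/
lemma exists_dual_attained :
    ∃ B : Matrix n n ℂ, Ctr B ∧ (B * A).trace = (traceNorm A : ℂ) := by
  classical
  set g : n → ℂ := fun k => if lam A k = 0 then 0 else ((Real.sqrt (lam A k) : ℝ) : ℂ)⁻¹ with hg
  have hsqrtfact : ∀ k, ((lam A k : ℝ) : ℂ)
      = ((Real.sqrt (lam A k) : ℝ) : ℂ) * ((Real.sqrt (lam A k) : ℝ) : ℂ) := fun k => by
    rw [← Complex.ofReal_mul, Real.mul_self_sqrt (lam_nonneg A k)]
  have hsne : ∀ k, lam A k ≠ 0 → ((Real.sqrt (lam A k) : ℝ) : ℂ) ≠ 0 := fun k hk => by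
    exact_mod_cast Real.sqrt_ne_zero'.2 (lt_of_le_of_ne (lam_nonneg A k) (Ne.symm hk))
  have hUstar : (star (Uu A))ᴴ = Uu A := by
    rw [Matrix.star_eq_conjTranspose, conjTranspose_conjTranspose]
  refine ⟨sand A (diagonal g) * Aᴴ, ?_, ?_⟩
  · -- contraction
    have hBBH : (sand A (diagonal g) * Aᴴ) * (sand A (diagonal g) * Aᴴ)ᴴ
        = sand A (diagonal (fun k => if lam A k = 0 then 0 else (1:ℂ))) := by
      calc (sand A (diagonal g) * Aᴴ) * (sand A (diagonal g) * Aᴴ)ᴴ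
          = sand A (diagonal g) * (Aᴴ * A) * (sand A (diagonal g))ᴴ := by
            simp only [conjTranspose_mul, conjTranspose_conjTranspose, mul_assoc]
        _ = sand A (diagonal g) * sand A (diagonal ((↑) ∘ lam A)) * sand A (diagonal g)ᴴ := by
            rw [← spectral', sand_conjTranspose]
        _ = sand A (diagonal g * diagonal ((↑) ∘ lam A) * (diagonal g)ᴴ) := by
            rw [sand_mul, sand_mul]
        _ = sand A (diagonal (fun k => if lam A k = 0 then 0 else (1:ℂ))) := by
            rw [diagonal_conjTranspose, diagonal_mul_diagonal, diagonal_mul_diagonal]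
            refine congrArg (sand A) (congrArg diagonal (funext fun k => ?_))
            by_cases hk : lam A k = 0
            · simp [hg, hk]
            · simp only [hg, hk, if_false, Pi.star_apply, Function.comp_apply, star_inv₀]
              rw [hsqrtfact k]
              have := hsne k hk
              have hreal : star ((Real.sqrt (lam A k) : ℝ) : ℂ)
                  = ((Real.sqrt (lam A k) : ℝ) : ℂ) := by
                simp [Complex.star_def, Complex.conj_ofReal]
              rw [hreal]
              field_simp
    have hctr : Ctr (sand A (diagonal g) * Aᴴ)ᴴ := by
      intro v
      have hsq : cnorm ((sand A (diagonal g) * Aᴴ)ᴴ *ᵥ v) ^ 2 ≤ cnorm v ^ 2 := by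
        rw [cnorm_conjTranspose_mulVec_sq, hBBH]
        set w := star (Uu A) *ᵥ v with hw
        have hlhs : dotProduct (star v)
            ((sand A (diagonal (fun k => if lam A k = 0 then 0 else (1:ℂ)))) *ᵥ v)
            = dotProduct (star w)
              (diagonal (fun k => if lam A k = 0 then 0 else (1:ℂ)) *ᵥ w) := by
          unfold sand
          rw [← mulVec_mulVec, ← mulVec_mulVec, dotProduct_mulVec (star v), hw, star_mulVec,
            hUstar, ← dotProduct_mulVec]
        have hrhs : cnorm v ^ 2 = (dotProduct (star w) w).re := by
          rw [cnorm_sq, hw, star_mulVec, ← dotProduct_mulVec, mulVec_mulVec, hUstar,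
            U_mul_star_U, one_mulVec]
        rw [hlhs, hrhs, dotProduct, dotProduct, Complex.re_sum, Complex.re_sum]
        refine Finset.sum_le_sum fun k _ => ?_
        simp only [mulVec_diagonal, Pi.star_apply]
        by_cases hk : lam A k = 0
        · simp only [hk, if_true, mul_zero, zero_mul, Complex.zero_re]
          have h0 : star (w k) * w k = (Complex.normSq (w k) : ℂ) := by
            rw [Complex.star_def, ← Complex.normSq_eq_conj_mul_self]
          simp only [h0, Complex.ofReal_re]
          exact Complex.normSq_nonneg (w k)
        · simp [hk]
      have h2 := Real.sqrt_le_sqrt hsq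
      rwa [Real.sqrt_sq (cnorm_nonneg _), Real.sqrt_sq (cnorm_nonneg _)] at h2
    have := ctr_conjTranspose hctr
    rwa [conjTranspose_conjTranspose] at this
  · -- trace value
    have key : sand A (diagonal g) * Aᴴ * A = sand A (diagonal ((↑) ∘ Real.sqrt ∘ lam A)) := by
      rw [mul_assoc, spectral', sand_mul, diagonal_mul_diagonal]
      refine congrArg (sand A) (congrArg diagonal (funext fun k => ?_))
      by_cases hk : lam A k = 0
      · simp [hg, hk, Real.sqrt_eq_zero', hk.le]
      · simp only [hg, hk, if_false, Function.comp_apply]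
        rw [hsqrtfact k]
        have := hsne k hk
        field_simp
    rw [key, sand_trace, trace_diagonal, traceNorm_eq_sum]
    push_cast
    simp

end core

section derived
variable {A B : Matrix n n ℂ}

lemma traceNorm_nonneg (A : Matrix n n ℂ) : 0 ≤ traceNorm A := by
  rw [traceNorm_eq_sum]
  exact Finset.sum_nonneg fun i _ => Real.sqrt_nonneg _

lemma traceNorm_re_attained (A : Matrix n n ℂ) :
    ∃ B : Matrix n n ℂ, Ctr B ∧ ((B * A).trace).re = traceNorm A := by
  obtain ⟨B, hB, h⟩ := exists_dual_attained A
  exact ⟨B, hB, by rw [h, Complex.ofReal_re]⟩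

lemma traceNorm_triangle (A B : Matrix n n ℂ) :
    traceNorm (A + B) ≤ traceNorm A + traceNorm B := by
  obtain ⟨C, hC, h⟩ := traceNorm_re_attained (A + B)
  rw [← h, mul_add, trace_add, Complex.add_re]
  have h1 := abs_trace_mul_le A C (ctr_conjTranspose hC)
  have h2 := abs_trace_mul_le B C (ctr_conjTranspose hC)
  have r1 := Complex.re_le_norm ((C * A).trace)
  have r2 := Complex.re_le_norm ((C * B).trace)
  linarith

lemma traceNorm_conjTranspose_le (A : Matrix n n ℂ) : traceNorm Aᴴ ≤ traceNorm A := by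
  obtain ⟨C, hC, h⟩ := traceNorm_re_attained Aᴴ
  rw [← h]
  have key : (C * Aᴴ).trace = star ((Cᴴ * A).trace) := by
    rw [← trace_conjTranspose, conjTranspose_mul, conjTranspose_conjTranspose]
    rw [trace_mul_comm]
  rw [key]
  have h2 : Ctr Cᴴᴴ := by rw [conjTranspose_conjTranspose]; exact hC
  have := abs_trace_mul_le A Cᴴ h2
  have := Complex.re_le_norm (star ((Cᴴ * A).trace))
  have habs : ‖star ((Cᴴ * A).trace)‖ = ‖(Cᴴ * A).trace‖ :=
    norm_star _
  linarith

lemma traceNorm_conjTranspose (A : Matrix n n ℂ) : traceNorm Aᴴ = traceNorm A := by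
  refine le_antisymm (traceNorm_conjTranspose_le A) ?_
  have := traceNorm_conjTranspose_le Aᴴ
  rwa [conjTranspose_conjTranspose] at this

lemma traceNorm_congr (h : Aᴴ * A = Bᴴ * B) : traceNorm A = traceNorm B := by
  have key : ∀ (M N : Matrix n n ℂ) (hM : M.PosSemidef) (hN : N.PosSemidef), M = N →
      ((hM.1.eigenvectorUnitary : Matrix n n ℂ) *
        diagonal (((↑) : ℝ → ℂ) ∘ (√·) ∘ hM.1.eigenvalues) *
        (star (hM.1.eigenvectorUnitary : Matrix n n ℂ))).trace.re
      = ((hN.1.eigenvectorUnitary : Matrix n n ℂ) *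
        diagonal (((↑) : ℝ → ℂ) ∘ (√·) ∘ hN.1.eigenvalues) *
        (star (hN.1.eigenvectorUnitary : Matrix n n ℂ))).trace.re := by
    rintro M _ hM hN rfl; rfl
  exact key _ _ (posSemidef_conjTranspose_mul_self A) (posSemidef_conjTranspose_mul_self B) h

lemma traceNorm_neg (A : Matrix n n ℂ) : traceNorm (-A) = traceNorm A :=
  traceNorm_congr (by simp)

open scoped MatrixOrder in
lemma traceNorm_psd {M : Matrix n n ℂ} (h : M.PosSemidef) : traceNorm M = M.trace.re := by
  have hMM := Matrix.posSemidef_conjTranspose_mul_self M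
  have e1 : traceNorm M = (cfc Real.sqrt (Mᴴ * M)).trace.re := by
    rw [hMM.1.cfc_eq]; rfl
  have e2 : cfc Real.sqrt (Mᴴ * M) = M := by
    rw [← cfcₙ_eq_cfc, ← CFC.sqrt_eq_real_sqrt (Mᴴ * M) hMM.nonneg, h.1.eq, CFC.sqrt_mul_self M h.nonneg]
  rw [e1, e2]

open scoped MatrixOrder in
lemma exists_sqrt_psd {m : Type*} [Fintype m] [DecidableEq m] {M : Matrix m m ℂ}
    (h : M.PosSemidef) : ∃ S : Matrix m m ℂ, S.PosSemidef ∧ S * S = M :=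
  ⟨CFC.sqrt M, (CFC.sqrt_nonneg M).posSemidef, CFC.sqrt_mul_sqrt_self M h.nonneg⟩

/-- Frobenius norm -/
noncomputable def frob (M : Matrix n n ℂ) : ℝ := cnorm (fun p : n × n => M p.1 p.2)

lemma frob_nonneg (M : Matrix n n ℂ) : 0 ≤ frob M := cnorm_nonneg _

lemma frob_sq (M : Matrix n n ℂ) : frob M ^ 2 = ((Mᴴ * M).trace).re := by
  rw [frob, cnorm_sq]
  congr 1
  rw [trace]
  simp only [dotProduct, Pi.star_apply, diag_apply, mul_apply, conjTranspose_apply]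
  rw [Fintype.sum_prod_type]
  rw [Finset.sum_comm]

lemma frobCS (W Y : Matrix n n ℂ) :
    ‖(Wᴴ * Y).trace‖ ≤ frob W * frob Y := by
  have h := cs (fun p : n × n => W p.1 p.2) (fun p => Y p.1 p.2)
  have e : (Wᴴ * Y).trace = dotProduct (star (fun p : n × n => W p.1 p.2))
      (fun p : n × n => Y p.1 p.2) := by
    rw [trace]
    simp only [dotProduct, Pi.star_apply, diag_apply, mul_apply, conjTranspose_apply]
    rw [Fintype.sum_prod_type]
    rw [Finset.sum_comm]
  rw [e]
  exact h

lemma cnorm_le_of_sq_le {x y : ℝ} (hx : 0 ≤ x) (hy : 0 ≤ y) (h : x ^ 2 ≤ y ^ 2) : x ≤ y := by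
  nlinarith

lemma frob_sq_cols (M : Matrix n n ℂ) :
    ((Mᴴ * M).trace).re = ∑ j, cnorm (fun i => M i j) ^ 2 := by
  rw [trace]
  simp only [diag_apply, mul_apply, conjTranspose_apply]
  rw [Complex.re_sum]
  refine Finset.sum_congr rfl fun j _ => ?_
  rw [cnorm_sq]
  simp [dotProduct]

lemma frob_mul_le {C : Matrix n n ℂ} (hC : Ctr C) (X : Matrix n n ℂ) :
    frob (C * X) ≤ frob X := by
  refine cnorm_le_of_sq_le (frob_nonneg _) (frob_nonneg _) ?_
  rw [frob_sq, frob_sq, frob_sq_cols, frob_sq_cols]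
  refine Finset.sum_le_sum fun j _ => ?_
  have hcol : (fun i => (C * X) i j) = C *ᵥ (fun i => X i j) := by
    funext i; simp [mul_apply, mulVec, dotProduct]
  rw [hcol]
  have := hC (fun i => X i j)
  have h0 := cnorm_nonneg (C *ᵥ fun i => X i j)
  nlinarith

lemma frob_conjTranspose (M : Matrix n n ℂ) : frob Mᴴ = frob M := by
  refine le_antisymm ?_ ?_ <;>
  · refine cnorm_le_of_sq_le (frob_nonneg _) (frob_nonneg _) (le_of_eq ?_)
    rw [frob_sq, frob_sq]
    first
    | rw [conjTranspose_conjTranspose, trace_mul_comm]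
    | rw [conjTranspose_conjTranspose, trace_mul_comm]

lemma traceNorm_mul_le (X Y : Matrix n n ℂ) : traceNorm (X * Y) ≤ frob X * frob Y := by
  obtain ⟨C, hC, h⟩ := traceNorm_re_attained (X * Y)
  rw [← h]
  have e : C * (X * Y) = ((C * X)ᴴ)ᴴ * Y := by
    rw [conjTranspose_conjTranspose, mul_assoc]
  rw [e]
  calc ((((C * X)ᴴ)ᴴ * Y).trace).re ≤ ‖(((C * X)ᴴ)ᴴ * Y).trace‖ :=
        Complex.re_le_norm _
    _ ≤ frob (C * X)ᴴ * frob Y := frobCS _ _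
    _ = frob (C * X) * frob Y := by rw [frob_conjTranspose]
    _ ≤ frob X * frob Y := by
        have := frob_mul_le hC X
        exact mul_le_mul_of_nonneg_right this (frob_nonneg Y)

end derived

section special
variable {a b : Type*} [Fintype a] [DecidableEq a] [Fintype b] [DecidableEq b]

lemma cnorm_sq' (v : n → ℂ) : cnorm v ^ 2 = ∑ i, Complex.normSq (v i) := by
  rw [cnorm_sq, dotProduct, Complex.re_sum]
  refine Finset.sum_congr rfl fun i _ => ?_
  simp [Complex.star_def, ← Complex.normSq_eq_conj_mul_self]

lemma cnorm_smul (c : ℂ) (w : n → ℂ) : cnorm (c • w) = ‖c‖ * cnorm w := by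
  rw [cnorm, cnorm]
  rw [show (WithLp.equiv 2 (n → ℂ)).symm (c • w) = c • (WithLp.equiv 2 (n → ℂ)).symm w from rfl]
  rw [norm_smul]

lemma cnorm_one_of_normSq {φ : n → ℂ} (hn : ∑ i, Complex.normSq (φ i) = 1) : cnorm φ = 1 := by
  have h := cnorm_sq' φ
  rw [hn] at h
  nlinarith [cnorm_nonneg φ]

lemma proj_mulVec (φ v : n → ℂ) :
    proj φ *ᵥ v = (dotProduct (star φ) v) • φ := by
  funext i
  simp only [proj, mulVec, dotProduct, of_apply, Pi.smul_apply, Pi.star_apply, smul_eq_mul,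
    Finset.sum_mul]
  refine Finset.sum_congr rfl fun j _ => by ring

lemma ctr_proj {φ : n → ℂ} (hn : ∑ i, Complex.normSq (φ i) = 1) : Ctr (proj φ) := by
  intro v
  rw [proj_mulVec, cnorm_smul]
  have h := cs φ v
  have h1 := cnorm_one_of_normSq hn
  calc ‖dotProduct (star φ) v‖ * cnorm φ
      ≤ (cnorm φ * cnorm v) * cnorm φ :=
        mul_le_mul_of_nonneg_right h (cnorm_nonneg φ)
    _ = cnorm v := by rw [h1]; ring

lemma proj_conjTranspose (φ : n → ℂ) : (proj φ)ᴴ = proj φ := by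
  ext i j; simp [proj, conjTranspose_apply, mul_comm]

lemma proj_mul_proj {φ : n → ℂ} (h1 : dotProduct (star φ) φ = 1) :
    proj φ * proj φ = proj φ := by
  ext i j
  simp only [mul_apply, proj, of_apply]
  have e : dotProduct (star φ) φ = ∑ k, star (φ k) * φ k := by
    refine Finset.sum_congr rfl fun k _ => rfl
  calc ∑ k, φ i * star (φ k) * (φ k * star (φ j))
      = (φ i * star (φ j)) * ∑ k, star (φ k) * φ k := by
        rw [Finset.mul_sum]; exact Finset.sum_congr rfl fun k _ => by ring
    _ = φ i * star (φ j) := by rw [← e, h1, mul_one]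

lemma trace_proj {φ : n → ℂ} (h1 : dotProduct (star φ) φ = 1) :
    (proj φ).trace = 1 := by
  rw [trace]
  simp only [diag_apply, proj, of_apply]
  rw [← h1, dotProduct]
  exact Finset.sum_congr rfl fun k _ => by
    simp only [Pi.star_apply]; ring

/-- the isometry `|φ⟩ ⊗ I` -/
noncomputable def embed (φ : a → ℂ) : Matrix (a × b) b ℂ :=
  Matrix.of fun p s => φ p.1 * (if p.2 = s then 1 else 0)

lemma kron_proj_eq_embed (φ : a → ℂ) (M : Matrix b b ℂ) :
    kron (proj φ) M = (embed φ : Matrix (a × b) b ℂ) * M * (embed φ : Matrix (a × b) b ℂ)ᴴ := by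
  ext p q
  simp only [kron, proj, of_apply, mul_apply, conjTranspose_apply, embed]
  calc φ p.1 * star (φ q.1) * M p.2 q.2
      = ∑ t, (if q.2 = t then φ p.1 * star (φ q.1) * M p.2 t else 0) := by
        rw [Finset.sum_ite_eq (Finset.univ) q.2 (fun t => φ p.1 * star (φ q.1) * M p.2 t)]
        simp
    _ = ∑ t, (∑ s, (if p.2 = s then φ p.1 * M s t else 0)) * star (φ q.1 * (if q.2 = t then 1 else 0)) := by
        refine Finset.sum_congr rfl fun t _ => ?_
        rw [Finset.sum_ite_eq (Finset.univ) p.2 (fun s => φ p.1 * M s t)]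
        simp only [Finset.mem_univ, if_true]
        by_cases h : q.2 = t <;> simp [h, mul_comm, mul_assoc, mul_left_comm]
    _ = ∑ t, (∑ s, φ p.1 * (if p.2 = s then 1 else 0) * M s t) * star (φ q.1 * (if q.2 = t then 1 else 0)) := by
        refine Finset.sum_congr rfl fun t _ => ?_
        congr 1
        refine Finset.sum_congr rfl fun s _ => ?_
        by_cases h : p.2 = s <;> simp [h]

lemma embed_mulVec (φ : a → ℂ) (w : b → ℂ) :
    (embed φ : Matrix (a × b) b ℂ) *ᵥ w = fun p => φ p.1 * w p.2 := by
  funext p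
  simp only [embed, mulVec, dotProduct, of_apply]
  rw [Finset.sum_eq_single p.2]
  · simp
  · intro s _ hs; simp [Ne.symm hs]
  · intro h; exact absurd (Finset.mem_univ p.2) h

lemma embedH_mulVec (φ : a → ℂ) (u : a × b → ℂ) :
    (embed φ : Matrix (a × b) b ℂ)ᴴ *ᵥ u
      = fun t => dotProduct (star φ) (fun x => u (x, t)) := by
  funext t
  simp only [embed, conjTranspose_apply, mulVec, dotProduct, of_apply, Pi.star_apply]
  rw [Fintype.sum_prod_type]
  refine Finset.sum_congr rfl fun x _ => ?_
  rw [Finset.sum_eq_single t]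
  · simp
  · intro s _ hs; simp [hs]
  · intro h; exact absurd (Finset.mem_univ t) h

lemma cnorm_sq_eq_of_sq {x y : ℝ} (hx : 0 ≤ x) (hy : 0 ≤ y) (h : x ^ 2 = y ^ 2) : x = y := by
  nlinarith

lemma cnorm_embed_mulVec {φ : a → ℂ} (hn : ∑ i, Complex.normSq (φ i) = 1) (w : b → ℂ) :
    cnorm ((embed φ : Matrix (a × b) b ℂ) *ᵥ w) = cnorm w := by
  refine cnorm_sq_eq_of_sq (cnorm_nonneg _) (cnorm_nonneg _) ?_
  rw [embed_mulVec, cnorm_sq', cnorm_sq']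
  rw [Fintype.sum_prod_type]
  calc ∑ x, ∑ s, Complex.normSq (φ x * w s)
      = ∑ x, ∑ s, Complex.normSq (φ x) * Complex.normSq (w s) := by
        refine Finset.sum_congr rfl fun x _ => Finset.sum_congr rfl fun s _ => ?_
        rw [Complex.normSq_mul]
    _ = (∑ x, Complex.normSq (φ x)) * (∑ s, Complex.normSq (w s)) := by
        rw [Finset.sum_mul]
        refine Finset.sum_congr rfl fun x _ => ?_
        rw [Finset.mul_sum]
    _ = ∑ s, Complex.normSq (w s) := by rw [hn, one_mul]

lemma cnorm_embedH_le {φ : a → ℂ} (hn : ∑ i, Complex.normSq (φ i) = 1) (u : a × b → ℂ) :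
    cnorm ((embed φ : Matrix (a × b) b ℂ)ᴴ *ᵥ u) ≤ cnorm u := by
  refine cnorm_le_of_sq_le (cnorm_nonneg _) (cnorm_nonneg _) ?_
  rw [embedH_mulVec, cnorm_sq', cnorm_sq']
  rw [Fintype.sum_prod_type]
  rw [Finset.sum_comm]
  refine Finset.sum_le_sum fun t _ => ?_
  have hcs := cs φ (fun x => u (x, t))
  have h1 : cnorm φ = 1 := cnorm_one_of_normSq hn
  rw [h1, one_mul] at hcs
  have h2 : Complex.normSq (dotProduct (star φ) (fun x => u (x, t)))
      ≤ cnorm (fun x => u (x, t)) ^ 2 := by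
    rw [← Complex.sq_norm]
    exact pow_le_pow_left₀ (norm_nonneg _) hcs 2
  calc Complex.normSq (dotProduct (star φ) (fun x => u (x, t)))
      ≤ cnorm (fun x => u (x, t)) ^ 2 := h2
    _ = ∑ x, Complex.normSq (u (x, t)) := cnorm_sq' _

lemma kron_proj_eq_embed' (φ : a → ℂ) (M : Matrix b b ℂ) :
    kron (proj φ) M = (embed φ : Matrix (a × b) b ℂ) * (M * (embed φ : Matrix (a × b) b ℂ)ᴴ) := by
  rw [kron_proj_eq_embed, Matrix.mul_assoc]

lemma traceNorm_kron_proj_le {φ : a → ℂ} (hn : ∑ i, Complex.normSq (φ i) = 1)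
    (M : Matrix b b ℂ) : traceNorm (kron (proj φ) M) ≤ traceNorm M := by
  obtain ⟨C, hC, h⟩ := traceNorm_re_attained (kron (proj φ) M)
  rw [← h, kron_proj_eq_embed']
  have etr : (C * ((embed φ : Matrix (a × b) b ℂ) * (M * ((embed φ : Matrix (a × b) b ℂ))ᴴ))).trace
      = ((((embed φ : Matrix (a × b) b ℂ))ᴴ * (C * (embed φ : Matrix (a × b) b ℂ))) * M).trace := by
    calc (C * ((embed φ : Matrix (a × b) b ℂ) * (M * ((embed φ : Matrix (a × b) b ℂ))ᴴ))).trace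
        = ((C * (embed φ : Matrix (a × b) b ℂ)) * (M * ((embed φ : Matrix (a × b) b ℂ))ᴴ)).trace := by rw [Matrix.mul_assoc]
      _ = ((M * ((embed φ : Matrix (a × b) b ℂ))ᴴ) * (C * (embed φ : Matrix (a × b) b ℂ))).trace := trace_mul_comm _ _
      _ = (M * (((embed φ : Matrix (a × b) b ℂ))ᴴ * (C * (embed φ : Matrix (a × b) b ℂ)))).trace := by rw [Matrix.mul_assoc]
      _ = ((((embed φ : Matrix (a × b) b ℂ))ᴴ * (C * (embed φ : Matrix (a × b) b ℂ))) * M).trace := trace_mul_comm _ _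
  rw [etr]
  have hct : (((embed φ : Matrix (a × b) b ℂ))ᴴ * (C * (embed φ : Matrix (a × b) b ℂ)) : Matrix b b ℂ)ᴴ
      = ((embed φ : Matrix (a × b) b ℂ))ᴴ * (Cᴴ * (embed φ : Matrix (a × b) b ℂ)) := by
    rw [conjTranspose_mul, conjTranspose_mul, conjTranspose_conjTranspose, Matrix.mul_assoc]
  have hctr : Ctr ((((embed φ : Matrix (a × b) b ℂ))ᴴ * (C * (embed φ : Matrix (a × b) b ℂ)) : Matrix b b ℂ)ᴴ) := by
    rw [hct]
    intro v
    have e1 : ((embed φ : Matrix (a × b) b ℂ))ᴴ *ᵥ (Cᴴ *ᵥ ((embed φ : Matrix (a × b) b ℂ) *ᵥ v))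
        = (((embed φ : Matrix (a × b) b ℂ))ᴴ * (Cᴴ * (embed φ : Matrix (a × b) b ℂ))) *ᵥ v := by
      rw [mulVec_mulVec, mulVec_mulVec, Matrix.mul_assoc]
    rw [← e1]
    calc cnorm (((embed φ : Matrix (a × b) b ℂ))ᴴ *ᵥ (Cᴴ *ᵥ ((embed φ : Matrix (a × b) b ℂ) *ᵥ v)))
        ≤ cnorm (Cᴴ *ᵥ ((embed φ : Matrix (a × b) b ℂ) *ᵥ v)) := cnorm_embedH_le hn _
      _ ≤ cnorm ((embed φ : Matrix (a × b) b ℂ) *ᵥ v) := ctr_conjTranspose hC _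
      _ = cnorm v := cnorm_embed_mulVec hn v
  have hfin := abs_trace_mul_le M (((embed φ : Matrix (a × b) b ℂ))ᴴ * (C * (embed φ : Matrix (a × b) b ℂ))) hctr
  have hre := Complex.re_le_norm (((((embed φ : Matrix (a × b) b ℂ))ᴴ * (C * (embed φ : Matrix (a × b) b ℂ))) * M).trace)
  linarith

lemma embedH_mul_embed {φ : a → ℂ} (h1 : dotProduct (star φ) φ = 1) :
    (embed φ : Matrix (a × b) b ℂ)ᴴ * (embed φ : Matrix (a × b) b ℂ) = 1 := by
  ext s t
  simp only [mul_apply, conjTranspose_apply, embed, of_apply, Fintype.sum_prod_type]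
  have hterm : ∀ x : a, ∑ u : b, star (φ x * (if u = s then 1 else 0))
      * (φ x * (if u = t then 1 else 0))
      = star (φ x) * φ x * (if s = t then 1 else 0) := by
    intro x
    rw [Finset.sum_eq_single s]
    · simp
    · intro u _ hu; simp [hu]
    · intro hmem; exact absurd (Finset.mem_univ s) hmem
  rw [Finset.sum_congr rfl fun x _ => hterm x]
  rw [← Finset.sum_mul]
  have : (∑ x, star (φ x) * φ x) = 1 := by
    rw [← h1]; rfl
  rw [this, one_mul, one_apply]

lemma kron_proj_one (φ : a → ℂ) :
    kron (proj φ) (1 : Matrix b b ℂ) = (embed φ : Matrix (a × b) b ℂ) * ((embed φ : Matrix (a × b) b ℂ))ᴴ := by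
  rw [kron_proj_eq_embed, Matrix.mul_one]

lemma P_rho_P (φ : a → ℂ) (ρ : Matrix (a × b) (a × b) ℂ) :
    (kron (proj φ) (1 : Matrix b b ℂ)) * ρ * (kron (proj φ) 1)
      = kron (proj φ) ((embed φ : Matrix (a × b) b ℂ)ᴴ * (ρ * (embed φ : Matrix (a × b) b ℂ))) := by
  rw [kron_proj_one, kron_proj_eq_embed']
  simp only [Matrix.mul_assoc]

lemma ptraceA_sub (X Y : Matrix (a × b) (a × b) ℂ) :
    ptraceA (X - Y) = ptraceA X - ptraceA Y := by
  ext s t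
  simp [ptraceA, Finset.sum_sub_distrib]

lemma ptraceA_kron_proj {φ : a → ℂ} (h1 : dotProduct (star φ) φ = 1)
    (M : Matrix b b ℂ) : ptraceA (kron (proj φ) M) = M := by
  ext s t
  simp only [ptraceA, kron, proj, of_apply]
  rw [← Finset.sum_mul]
  have : (∑ x, φ x * star (φ x)) = 1 := by
    rw [← h1, dotProduct]
    exact Finset.sum_congr rfl fun x _ => by simp only [Pi.star_apply]; ring
  rw [this, one_mul]

lemma trace_mul_ptraceA (C : Matrix b b ℂ) (X : Matrix (a × b) (a × b) ℂ) :
    (C * ptraceA X).trace = ((kron (1 : Matrix a a ℂ) C) * X).trace := by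
  rw [trace, trace]
  simp only [diag_apply, mul_apply, ptraceA, kron, of_apply, one_apply, Fintype.sum_prod_type]
  have hR : ∀ (x : a) (t : b), ∑ y : a, ∑ s : b,
      (if x = y then 1 else 0) * C t s * X (y, s) (x, t)
      = ∑ s : b, C t s * X (x, s) (x, t) := by
    intro x t
    rw [Finset.sum_eq_single x]
    · exact Finset.sum_congr rfl fun s _ => by simp
    · intro y _ hy
      refine Finset.sum_eq_zero fun s _ => ?_
      rw [if_neg (fun hh => hy hh.symm), zero_mul, zero_mul]
    · intro hmem; exact absurd (Finset.mem_univ x) hmem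
  calc ∑ t : b, ∑ s : b, C t s * ∑ x : a, X (x, s) (x, t)
      = ∑ t : b, ∑ s : b, ∑ x : a, C t s * X (x, s) (x, t) := by
        refine Finset.sum_congr rfl fun t _ => Finset.sum_congr rfl fun s _ => ?_
        rw [Finset.mul_sum]
    _ = ∑ t : b, ∑ x : a, ∑ s : b, C t s * X (x, s) (x, t) := by
        exact Finset.sum_congr rfl fun t _ => Finset.sum_comm
    _ = ∑ x : a, ∑ t : b, ∑ s : b, C t s * X (x, s) (x, t) := Finset.sum_comm
    _ = ∑ x : a, ∑ t : b, ∑ y : a, ∑ s : b,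
          (if x = y then 1 else 0) * C t s * X (y, s) (x, t) := by
        exact Finset.sum_congr rfl fun x _ => Finset.sum_congr rfl fun t _ => (hR x t).symm

lemma trace_mul_ptraceB (C : Matrix a a ℂ) (X : Matrix (a × b) (a × b) ℂ) :
    (C * ptraceB X).trace = ((kron C (1 : Matrix b b ℂ)) * X).trace := by
  rw [trace, trace]
  simp only [diag_apply, mul_apply, ptraceB, kron, of_apply, one_apply, Fintype.sum_prod_type]
  have hR : ∀ (x : a) (s : b), ∑ y : a, ∑ t : b,
      C x y * (if s = t then 1 else 0) * X (y, t) (x, s)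
      = ∑ y : a, C x y * X (y, s) (x, s) := by
    intro x s
    refine Finset.sum_congr rfl fun y _ => ?_
    rw [Finset.sum_eq_single s]
    · simp
    · intro t _ ht
      rw [if_neg (fun hh => ht hh.symm), mul_zero, zero_mul]
    · intro hmem; exact absurd (Finset.mem_univ s) hmem
  calc ∑ x : a, ∑ y : a, C x y * ∑ s : b, X (y, s) (x, s)
      = ∑ x : a, ∑ y : a, ∑ s : b, C x y * X (y, s) (x, s) := by
        refine Finset.sum_congr rfl fun x _ => Finset.sum_congr rfl fun y _ => ?_
        rw [Finset.mul_sum]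
    _ = ∑ x : a, ∑ s : b, ∑ y : a, C x y * X (y, s) (x, s) := by
        exact Finset.sum_congr rfl fun x _ => Finset.sum_comm
    _ = ∑ x : a, ∑ s : b, ∑ y : a, ∑ t : b,
          C x y * (if s = t then 1 else 0) * X (y, t) (x, s) := by
        exact Finset.sum_congr rfl fun x _ => Finset.sum_congr rfl fun s _ => (hR x s).symm

lemma kron_one_mulVec (C : Matrix b b ℂ) (v : a × b → ℂ) :
    (kron (1 : Matrix a a ℂ) C) *ᵥ v = fun p => (C *ᵥ fun s => v (p.1, s)) p.2 := by
  funext p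
  simp only [kron, mulVec, dotProduct, of_apply, one_apply, Fintype.sum_prod_type]
  rw [Finset.sum_eq_single p.1]
  · simp
  · intro y _ hy; simp [Ne.symm hy]
  · intro hmem; exact absurd (Finset.mem_univ p.1) hmem

lemma ctr_kron_one {C : Matrix b b ℂ} (hC : Ctr C) :
    Ctr (kron (1 : Matrix a a ℂ) C) := by
  intro v
  refine cnorm_le_of_sq_le (cnorm_nonneg _) (cnorm_nonneg _) ?_
  rw [kron_one_mulVec, cnorm_sq', cnorm_sq']
  rw [Fintype.sum_prod_type, Fintype.sum_prod_type]
  refine Finset.sum_le_sum fun x _ => ?_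
  have hl : ∑ t, Complex.normSq ((C *ᵥ fun s => v (x, s)) t)
      = cnorm (C *ᵥ fun s => v (x, s)) ^ 2 := (cnorm_sq' _).symm
  have hr : ∑ s, Complex.normSq (v (x, s)) = cnorm (fun s => v (x, s)) ^ 2 :=
    (cnorm_sq' _).symm
  rw [hl, hr]
  have h := hC (fun s => v (x, s))
  have h0 := cnorm_nonneg (C *ᵥ fun s => v (x, s))
  nlinarith

lemma kron_one_conjTranspose (C : Matrix b b ℂ) :
    (kron (1 : Matrix a a ℂ) C)ᴴ = kron (1 : Matrix a a ℂ) Cᴴ := by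
  ext p q
  simp only [conjTranspose_apply, kron, of_apply, one_apply, star_mul']
  by_cases h : p.1 = q.1
  · simp [h, eq_comm]
  · rw [if_neg (fun hh => h hh.symm), if_neg h, star_zero]

lemma traceNorm_ptraceA_le (X : Matrix (a × b) (a × b) ℂ) :
    traceNorm (ptraceA X) ≤ traceNorm X := by
  obtain ⟨C, hC, h⟩ := traceNorm_re_attained (ptraceA X)
  rw [← h, trace_mul_ptraceA]
  have hctr : Ctr ((kron (1 : Matrix a a ℂ) C)ᴴ) := by
    rw [kron_one_conjTranspose]
    exact ctr_kron_one (ctr_conjTranspose hC)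
  have hfin := abs_trace_mul_le X (kron (1 : Matrix a a ℂ) C) hctr
  have hre := Complex.re_le_norm (((kron (1 : Matrix a a ℂ) C) * X).trace)
  linarith

end special

end TN


open TN in
theorem local_states_product_bound
    {a b r : Type*} [Fintype a] [DecidableEq a] [Fintype b] [DecidableEq b]
    [Fintype r] [DecidableEq r]
    (ρAB : Matrix (a × b) (a × b) ℂ)
    (hρ : ρAB.PosSemidef) (hρtr : ρAB.trace = 1)
    (ψ : (a × b) × r → ℂ) (hψ : ∑ x, ‖ψ x‖ ^ 2 = 1)
    (hpurif : ρAB = ptraceB (proj ψ))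
    (φ : a → ℂ) (hφ : ∑ i, ‖φ i‖ ^ 2 = 1)
    (μB : Matrix b b ℂ) (hμ : μB.PosSemidef) (hμtr : μB.trace = 1)
    (ε : ℝ) (hε : 0 ≤ ε)
    (hA : traceNorm (ptraceB ρAB - proj φ) ≤ ε)
    (hB : ptraceA ρAB = μB) :
    traceNorm (ρAB - kron (proj φ) μB) ≤ 4 * Real.sqrt ε := by
  classical
  -- normalization facts for φ
  have hn : ∑ i, Complex.normSq (φ i) = 1 := by
    rw [← hφ]
    exact Finset.sum_congr rfl fun i _ => (Complex.sq_norm (φ i)).symm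
  have h1 : dotProduct (star φ) φ = 1 := by
    rw [dotProduct]
    calc ∑ i, star φ i * φ i = ∑ i, (Complex.normSq (φ i) : ℂ) := by
          refine Finset.sum_congr rfl fun i _ => ?_
          rw [Pi.star_apply, Complex.star_def, ← Complex.normSq_eq_conj_mul_self]
      _ = ((∑ i, Complex.normSq (φ i) : ℝ) : ℂ) := by push_cast; rfl
      _ = 1 := by rw [hn, Complex.ofReal_one]
  -- notation
  set E : Matrix (a × b) b ℂ := embed φ with hE
  set P : Matrix (a × b) (a × b) ℂ := kron (proj φ) (1 : Matrix b b ℂ) with hP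
  have hPE : P = E * Eᴴ := kron_proj_one φ
  have hPH : Pᴴ = P := by
    rw [hPE, conjTranspose_mul, conjTranspose_conjTranspose]
  have hPP : P * P = P := by
    rw [hPE]
    calc E * Eᴴ * (E * Eᴴ) = E * (Eᴴ * E * Eᴴ) := by simp only [Matrix.mul_assoc]
      _ = E * Eᴴ := by rw [embedH_mul_embed h1, Matrix.one_mul]
  set Q : Matrix (a × b) (a × b) ℂ := 1 - P with hQ
  have hQH : Qᴴ = Q := by rw [hQ, conjTranspose_sub, conjTranspose_one, hPH]
  have hQQ : Q * Q = Q := by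
    rw [hQ]
    rw [sub_mul, one_mul, mul_sub, mul_one, hPP]
    abel
  -- trace of P ρ
  have hPtr : (P * ρAB).trace = (proj φ * ptraceB ρAB).trace :=
    (trace_mul_ptraceB (proj φ) ρAB).symm
  have hsplit : proj φ * ptraceB ρAB
      = proj φ * (ptraceB ρAB - proj φ) + proj φ * proj φ := by
    rw [mul_sub, sub_add_cancel]
  have hprojtr : (proj φ * proj φ).trace = 1 := by
    rw [proj_mul_proj h1, trace_proj h1]
  have habs : ‖(proj φ * (ptraceB ρAB - proj φ)).trace‖ ≤ ε := by
    have hc : Ctr ((proj φ)ᴴ) := by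
      rw [proj_conjTranspose]; exact ctr_proj hn
    exact le_trans (abs_trace_mul_le (ptraceB ρAB - proj φ) (proj φ) hc) hA
  have hretr : 1 - ε ≤ ((P * ρAB).trace).re := by
    rw [hPtr, hsplit, trace_add, hprojtr, Complex.add_re, Complex.one_re]
    have := Complex.abs_re_le_norm ((proj φ * (ptraceB ρAB - proj φ)).trace)
    have h2 := abs_le.mp (le_trans this habs)
    linarith [h2.1]
  -- δ
  set δ : ℝ := ((Q * ρAB).trace).re with hδ
  have hQρ : Q * ρAB = ρAB - P * ρAB := by rw [hQ, sub_mul, one_mul]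
  have hδval : δ = 1 - ((P * ρAB).trace).re := by
    rw [hδ, hQρ, trace_sub, hρtr, Complex.sub_re, Complex.one_re]
  have hδε : δ ≤ ε := by rw [hδval]; linarith
  have hδ0 : 0 ≤ δ := by
    have hcyc : (Q * ρAB).trace = (Q * ρAB * Qᴴ).trace := by
      rw [hQH]
      calc (Q * ρAB).trace = (Q * Q * ρAB).trace := by rw [hQQ]
        _ = (Q * ρAB * Q).trace := by
            rw [trace_mul_cycle Q ρAB Q]
    have hpsd := hρ.mul_mul_conjTranspose_same Q
    have := traceNorm_nonneg (Q * ρAB * Qᴴ)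
    rw [traceNorm_psd hpsd] at this
    rw [hδ, hcyc]
    exact this
  -- square root matrix
  obtain ⟨S, hSpsd, hSS⟩ := exists_sqrt_psd hρ
  have hSH : Sᴴ = S := hSpsd.1
  -- Frobenius computations
  have hfrobS : frob S = 1 := by
    have h2 : frob S ^ 2 = 1 := by
      rw [frob_sq, hSH, hSS, hρtr, Complex.one_re]
    nlinarith [frob_nonneg S]
  have hfrobQS : frob (Q * S) = Real.sqrt δ := by
    have h2 : frob (Q * S) ^ 2 = δ := by
      rw [frob_sq, conjTranspose_mul, hSH, hQH]
      have e : S * Q * (Q * S) = S * (Q * S) := by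
        calc S * Q * (Q * S) = S * (Q * Q) * S := by simp only [Matrix.mul_assoc]
          _ = S * (Q * S) := by rw [hQQ, Matrix.mul_assoc]
      rw [e]
      have e2 : (S * (Q * S)).trace = (Q * ρAB).trace := by
        rw [trace_mul_comm, Matrix.mul_assoc, hSS]
      rw [e2]
    rw [← h2, Real.sqrt_sq (frob_nonneg _)]
  have hfrobSP : frob (S * P) ≤ 1 := by
    have h2 : frob (S * P) ^ 2 = 1 - δ := by
      rw [frob_sq, conjTranspose_mul, hSH, hPH]
      have e : P * S * (S * P) = P * ρAB * P := by
        calc P * S * (S * P) = P * (S * S) * P := by simp only [Matrix.mul_assoc]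
          _ = P * ρAB * P := by rw [hSS]
      rw [e]
      have e2 : (P * ρAB * P).trace = (P * ρAB).trace := by
        rw [trace_mul_cycle, hPP]
      rw [e2, hδval]
      ring
    nlinarith [frob_nonneg (S * P), Real.sqrt_nonneg δ, hδ0]
  -- gentle measurement bound
  have hQρbound : traceNorm (Q * ρAB) ≤ Real.sqrt δ := by
    have e : Q * ρAB = (Q * S) * S := by rw [Matrix.mul_assoc, hSS]
    rw [e]
    calc traceNorm ((Q * S) * S) ≤ frob (Q * S) * frob S := traceNorm_mul_le _ _
      _ = Real.sqrt δ := by rw [hfrobQS, hfrobS, mul_one]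
  have hPρQbound : traceNorm (P * ρAB * Q) ≤ Real.sqrt δ := by
    have e : (Q * ρAB * P)ᴴ = P * ρAB * Q := by
      rw [conjTranspose_mul, conjTranspose_mul, hρ.1.eq, hQH, hPH, Matrix.mul_assoc]
    rw [← e, traceNorm_conjTranspose]
    have e2 : Q * ρAB * P = (Q * S) * (S * P) := by
      rw [← hSS]
      simp only [Matrix.mul_assoc]
    rw [e2]
    calc traceNorm ((Q * S) * (S * P)) ≤ frob (Q * S) * frob (S * P) := traceNorm_mul_le _ _
      _ ≤ Real.sqrt δ * 1 := by
          refine mul_le_mul ?_ hfrobSP (frob_nonneg _) (Real.sqrt_nonneg δ)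
          rw [hfrobQS]
      _ = Real.sqrt δ := mul_one _
  have hgentledecomp : ρAB - P * ρAB * P = Q * ρAB + P * ρAB * Q := by
    rw [hQ]
    rw [sub_mul, one_mul, mul_sub, mul_one]
    abel
  have hgentle : traceNorm (ρAB - P * ρAB * P) ≤ 2 * Real.sqrt δ := by
    rw [hgentledecomp]
    calc traceNorm (Q * ρAB + P * ρAB * Q)
        ≤ traceNorm (Q * ρAB) + traceNorm (P * ρAB * Q) := traceNorm_triangle _ _
      _ ≤ Real.sqrt δ + Real.sqrt δ := add_le_add hQρbound hPρQbound
      _ = 2 * Real.sqrt δ := by ring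
  -- the compressed state σ
  set σ : Matrix b b ℂ := Eᴴ * (ρAB * E) with hσ
  have hPρP : P * ρAB * P = kron (proj φ) σ := P_rho_P φ ρAB
  have hμσ : μB - σ = ptraceA (ρAB - P * ρAB * P) := by
    rw [ptraceA_sub, hB, hPρP, ptraceA_kron_proj h1]
  have hμσbound : traceNorm (μB - σ) ≤ 2 * Real.sqrt δ := by
    rw [hμσ]
    exact le_trans (traceNorm_ptraceA_le _) hgentle
  -- final assembly
  have hkron_sub : kron (proj φ) σ - kron (proj φ) μB = kron (proj φ) (σ - μB) := by
    ext p q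
    simp [kron, mul_sub]
  have hdecomp : ρAB - kron (proj φ) μB
      = (ρAB - P * ρAB * P) + kron (proj φ) (σ - μB) := by
    rw [← hkron_sub, hPρP]
    abel
  have hkronbound : traceNorm (kron (proj φ) (σ - μB)) ≤ 2 * Real.sqrt δ := by
    calc traceNorm (kron (proj φ) (σ - μB)) ≤ traceNorm (σ - μB) :=
          traceNorm_kron_proj_le hn _
      _ = traceNorm (μB - σ) := by
          rw [show σ - μB = -(μB - σ) by abel, traceNorm_neg]
      _ ≤ 2 * Real.sqrt δ := hμσbound
  have hsqrt : Real.sqrt δ ≤ Real.sqrt ε := Real.sqrt_le_sqrt hδε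
  calc traceNorm (ρAB - kron (proj φ) μB)
      = traceNorm ((ρAB - P * ρAB * P) + kron (proj φ) (σ - μB)) := by rw [← hdecomp]
    _ ≤ traceNorm (ρAB - P * ρAB * P) + traceNorm (kron (proj φ) (σ - μB)) :=
        traceNorm_triangle _ _
    _ ≤ 2 * Real.sqrt δ + 2 * Real.sqrt δ := add_le_add hgentle hkronbound
    _ = 4 * Real.sqrt δ := by ring
    _ ≤ 4 * Real.sqrt ε := by linarith
end

section
/- Define F' (F, f̃) = (f̃²(F² + ((1-F)/3)²) + (1-f̃²)/8) / (f̃²(F² + 2F(1-F)/3 + 5((1-F)/3)²) + (1-f̃²)/2). Then for f̃ with 10 - 9/f̃² ≥ 0, the values F_{min,max} = (3 ± √(10 - 9/f̃²))/4 are fixed points, i.e. F'(F_{max}, f̃) = F_{max} and F'(F_{min}, f̃) = F_{min}. -/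
theorem bbpssw_correlated_noise_fixed_points (ftil : ℝ) (hf : ftil ≠ 0)
    (hdisc : 0 ≤ 10 - 9 / ftil ^ 2) :
    let F' : ℝ → ℝ := fun F =>
      (ftil ^ 2 * (F ^ 2 + ((1 - F) / 3) ^ 2) + (1 - ftil ^ 2) / 8) /
        (ftil ^ 2 * (F ^ 2 + 2 * F * (1 - F) / 3 + 5 * ((1 - F) / 3) ^ 2)
          + (1 - ftil ^ 2) / 2)
    let Fmax : ℝ := (3 + Real.sqrt (10 - 9 / ftil ^ 2)) / 4
    let Fmin : ℝ := (3 - Real.sqrt (10 - 9 / ftil ^ 2)) / 4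
    F' Fmax = Fmax ∧ F' Fmin = Fmin := by
  intro F' Fmax Fmin
  have hf2 : (0:ℝ) < ftil ^ 2 := by positivity
  set s := Real.sqrt (10 - 9 / ftil ^ 2) with hs_def
  have hs : s ^ 2 = 10 - 9 / ftil ^ 2 := Real.sq_sqrt hdisc
  have hs' : s ^ 2 * ftil ^ 2 = 10 * ftil ^ 2 - 9 := by
    field_simp at hs
    linarith [hs]
  have hs0 : 0 ≤ s := Real.sqrt_nonneg _
  have hslt : 2 * s < 7 := by nlinarith [hs, hf2, div_pos (by norm_num : (0:ℝ) < 9) hf2]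
  have hdenp : ftil ^ 2 * (Fmax ^ 2 + 2 * Fmax * (1 - Fmax) / 3 + 5 * ((1 - Fmax) / 3) ^ 2)
      + (1 - ftil ^ 2) / 2 = ftil ^ 2 * (7 + 2 * s) / 9 := by
    show ftil ^ 2 * (((3 + s)/4) ^ 2 + 2 * ((3 + s)/4) * (1 - (3 + s)/4) / 3
        + 5 * ((1 - (3 + s)/4) / 3) ^ 2) + (1 - ftil ^ 2) / 2 = ftil ^ 2 * (7 + 2 * s) / 9
    linear_combination (1 / 18 : ℝ) * hs'
  have hdenm : ftil ^ 2 * (Fmin ^ 2 + 2 * Fmin * (1 - Fmin) / 3 + 5 * ((1 - Fmin) / 3) ^ 2)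
      + (1 - ftil ^ 2) / 2 = ftil ^ 2 * (7 - 2 * s) / 9 := by
    show ftil ^ 2 * (((3 - s)/4) ^ 2 + 2 * ((3 - s)/4) * (1 - (3 - s)/4) / 3
        + 5 * ((1 - (3 - s)/4) / 3) ^ 2) + (1 - ftil ^ 2) / 2 = ftil ^ 2 * (7 - 2 * s) / 9
    linear_combination (1 / 18 : ℝ) * hs'
  have hp : (0:ℝ) < ftil ^ 2 * (7 + 2 * s) / 9 := by positivity
  have hm : (0:ℝ) < ftil ^ 2 * (7 - 2 * s) / 9 := by
    have : (0:ℝ) < 7 - 2 * s := by linarith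
    positivity
  constructor
  · show (ftil ^ 2 * (Fmax ^ 2 + ((1 - Fmax) / 3) ^ 2) + (1 - ftil ^ 2) / 8) /
        (ftil ^ 2 * (Fmax ^ 2 + 2 * Fmax * (1 - Fmax) / 3 + 5 * ((1 - Fmax) / 3) ^ 2)
          + (1 - ftil ^ 2) / 2) = Fmax
    rw [hdenp, div_eq_iff hp.ne']
    show ftil ^ 2 * (((3 + s)/4) ^ 2 + ((1 - (3 + s)/4) / 3) ^ 2) + (1 - ftil ^ 2) / 8
        = (3 + s)/4 * (ftil ^ 2 * (7 + 2 * s) / 9)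
    linear_combination (1 / 72 : ℝ) * hs'
  · show (ftil ^ 2 * (Fmin ^ 2 + ((1 - Fmin) / 3) ^ 2) + (1 - ftil ^ 2) / 8) /
        (ftil ^ 2 * (Fmin ^ 2 + 2 * Fmin * (1 - Fmin) / 3 + 5 * ((1 - Fmin) / 3) ^ 2)
          + (1 - ftil ^ 2) / 2) = Fmin
    rw [hdenm, div_eq_iff hm.ne']
    show ftil ^ 2 * (((3 - s)/4) ^ 2 + ((1 - (3 - s)/4) / 3) ^ 2) + (1 - ftil ^ 2) / 8
        = (3 - s)/4 * (ftil ^ 2 * (7 - 2 * s) / 9)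
    linear_combination (1 / 72 : ℝ) * hs'
end
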